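/- arXiv:1209.4474 — 8 statements merged into one kernel-verified Lean document; each statement's English description precedes it below -/
import Mathlib

section
/- For a prime p ≥ 5, K_{p,3} = (p²-1)/24. -/
/-- For a prime `p ≥ 5`, `K_{p,3} = (p²-1)/24`. -/
theorem stmt_3 (p : ℕ) (hp : p.Prime) (hp5 : 5 ≤ p)
    (Q : PowerSeries ℚ)
    (hQ : Q * ((1 + PowerSeries.X) ^ p - 1 - PowerSeries.X ^ p)
        = -(p : PowerSeries ℚ) * PowerSeries.X) :
    PowerSeries.coeff 3 Q = ((p : ℚ) ^ 2 - 1) / 24 := by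
  have hD : ∀ n : ℕ, PowerSeries.coeff n ((1 + PowerSeries.X) ^ p - 1 - PowerSeries.X ^ p)
      = (p.choose n : ℚ) - (if n = 0 then 1 else 0) - (if n = p then 1 else 0) := by
    intro n
    have h1 : ((1 + PowerSeries.X : PowerSeries ℚ) ^ p)
        = Polynomial.coeToPowerSeries.ringHom ((1 + Polynomial.X : Polynomial ℚ) ^ p) := by
      simp [map_pow]
    rw [map_sub, map_sub, h1, Polynomial.coeToPowerSeries.ringHom_apply,
      Polynomial.coeff_coe, Polynomial.coeff_one_add_X_pow, PowerSeries.coeff_one,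
      PowerSeries.coeff_X_pow]
  have hR : ∀ n, PowerSeries.coeff n (-(p : PowerSeries ℚ) * PowerSeries.X)
      = if n = 1 then -(p : ℚ) else 0 := by
    intro n
    have h : -(p : PowerSeries ℚ) * PowerSeries.X
        = PowerSeries.C (-(p : ℚ)) * PowerSeries.X ^ 1 := by
      rw [map_neg, map_natCast, pow_one]
    rw [h, PowerSeries.coeff_C_mul_X_pow]
  have h0p : ¬ (0 = p) := by omega
  have h1p : ¬ (1 = p) := by omega
  have h2p : ¬ (2 = p) := by omega
  have h3p : ¬ (3 = p) := by omega
  have h4p : ¬ (4 = p) := by omega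
  have key : ∀ n : ℕ, ∑ i ∈ Finset.range (n+1),
      PowerSeries.coeff i Q * PowerSeries.coeff (n - i)
        ((1 + PowerSeries.X) ^ p - 1 - PowerSeries.X ^ p)
      = if n = 1 then -(p : ℚ) else 0 := by
    intro n
    have := congrArg (PowerSeries.coeff n) hQ
    rwa [PowerSeries.coeff_mul, Finset.Nat.sum_antidiagonal_eq_sum_range_succ_mk, hR] at this
  have e1 := key 1
  have e2 := key 2
  have e3 := key 3
  have e4 := key 4
  simp [Finset.sum_range_succ, hD, h0p, h1p, h2p, h3p, h4p] at e1 e2 e3 e4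
  -- choose values
  have n2 : (p - 1) * p = 2 * p.choose 2 := by
    have := Nat.descFactorial_eq_factorial_mul_choose p 2
    simpa [Nat.descFactorial_succ, Nat.descFactorial_zero, Nat.factorial] using this
  have n3 : (p - 2) * ((p - 1) * p) = 6 * p.choose 3 := by
    have := Nat.descFactorial_eq_factorial_mul_choose p 3
    simpa [Nat.descFactorial_succ, Nat.descFactorial_zero, Nat.factorial] using this
  have n4 : (p - 3) * ((p - 2) * ((p - 1) * p)) = 24 * p.choose 4 := by
    have := Nat.descFactorial_eq_factorial_mul_choose p 4
    simpa [Nat.descFactorial_succ, Nat.descFactorial_zero, Nat.factorial] using this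
  have c2 : (p.choose 2 : ℚ) = (p : ℚ) * ((p : ℚ) - 1) / 2 := by
    have := congrArg (fun n : ℕ => (n : ℚ)) n2
    simp only [Nat.cast_mul, Nat.cast_ofNat, Nat.cast_sub (show 1 ≤ p by omega),
      Nat.cast_one] at this
    linarith
  have c3 : (p.choose 3 : ℚ) = (p : ℚ) * ((p : ℚ) - 1) * ((p : ℚ) - 2) / 6 := by
    have := congrArg (fun n : ℕ => (n : ℚ)) n3
    simp only [Nat.cast_mul, Nat.cast_ofNat, Nat.cast_sub (show 1 ≤ p by omega),
      Nat.cast_sub (show 2 ≤ p by omega), Nat.cast_one] at this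
    linarith
  have c4 : (p.choose 4 : ℚ) = (p : ℚ) * ((p : ℚ) - 1) * ((p : ℚ) - 2) * ((p : ℚ) - 3) / 24 := by
    have := congrArg (fun n : ℕ => (n : ℚ)) n4
    simp only [Nat.cast_mul, Nat.cast_ofNat, Nat.cast_sub (show 1 ≤ p by omega),
      Nat.cast_sub (show 2 ≤ p by omega), Nat.cast_sub (show 3 ≤ p by omega),
      Nat.cast_one] at this
    linarith
  rw [c2] at e2 e3 e4
  rw [c3] at e3 e4
  rw [c4] at e4
  have hp0 : (p : ℚ) ≠ 0 := Nat.cast_ne_zero.mpr (by omega)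
  have hq0 : PowerSeries.constantCoeff Q = -1 :=
    mul_right_cancel₀ hp0 (by linear_combination e1)
  have hq1 : PowerSeries.coeff 1 Q = ((p : ℚ) - 1) / 2 :=
    mul_right_cancel₀ hp0 (by linear_combination e2 - ((p : ℚ) * ((p : ℚ) - 1) / 2) * hq0)
  have hq2 : PowerSeries.coeff 2 Q = -((p : ℚ) ^ 2 - 1) / 12 :=
    mul_right_cancel₀ hp0 (by
      linear_combination e3 - ((p : ℚ) * ((p : ℚ) - 1) * ((p : ℚ) - 2) / 6) * hq0
        - ((p : ℚ) * ((p : ℚ) - 1) / 2) * hq1)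
  refine mul_right_cancel₀ hp0 ?_
  linear_combination e4 - ((p : ℚ) * ((p : ℚ) - 1) * ((p : ℚ) - 2) * ((p : ℚ) - 3) / 24) * hq0
    - ((p : ℚ) * ((p : ℚ) - 1) * ((p : ℚ) - 2) / 6) * hq1
    - ((p : ℚ) * ((p : ℚ) - 1) / 2) * hq2
end

section
/- For a prime p ≥ 7, K_{p,5} = -(p²-1)(p²-9)/480. -/
open PowerSeries in
/-- For a prime `p ≥ 7`, `K_{p,5} = -(p²-1)(p²-9)/480`. -/
theorem stmt_5 (p : ℕ) (hp : p.Prime) (hp7 : 7 ≤ p)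
    (Q : PowerSeries ℚ)
    (hQ : Q * ((1 + PowerSeries.X) ^ p - 1 - PowerSeries.X ^ p)
        = -(p : PowerSeries ℚ) * PowerSeries.X) :
    PowerSeries.coeff 5 Q = -(((p : ℚ) ^ 2 - 1) * ((p : ℚ) ^ 2 - 9) / 480) := by
  have hpow : ((1 + X : ℚ⟦X⟧)) ^ p = (((1 + Polynomial.X) ^ p : Polynomial ℚ) : ℚ⟦X⟧) := by
    push_cast; ring
  have hDc : ∀ n, n ≤ 6 → PowerSeries.coeff n ((1 + X) ^ p - 1 - X ^ p : ℚ⟦X⟧)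
      = (p.choose n : ℚ) - if n = 0 then 1 else 0 := by
    intro n hn
    rw [map_sub, map_sub, hpow, Polynomial.coeff_coe, Polynomial.coeff_one_add_X_pow,
      PowerSeries.coeff_one, PowerSeries.coeff_X_pow, if_neg (by omega : ¬ n = p)]
    simp
  have hd0 : PowerSeries.coeff 0 ((1 + X) ^ p - 1 - X ^ p : ℚ⟦X⟧) = 0 := by
    rw [hDc 0 (by norm_num)]; norm_num
  have hd1 : PowerSeries.coeff 1 ((1 + X) ^ p - 1 - X ^ p : ℚ⟦X⟧) = (p : ℚ) := by
    rw [hDc 1 (by norm_num)]; norm_num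
  have hd2 : PowerSeries.coeff 2 ((1 + X) ^ p - 1 - X ^ p : ℚ⟦X⟧) = (p.choose 2 : ℚ) := by
    rw [hDc 2 (by norm_num)]; norm_num
  have hd3 : PowerSeries.coeff 3 ((1 + X) ^ p - 1 - X ^ p : ℚ⟦X⟧) = (p.choose 3 : ℚ) := by
    rw [hDc 3 (by norm_num)]; norm_num
  have hd4 : PowerSeries.coeff 4 ((1 + X) ^ p - 1 - X ^ p : ℚ⟦X⟧) = (p.choose 4 : ℚ) := by
    rw [hDc 4 (by norm_num)]; norm_num
  have hd5 : PowerSeries.coeff 5 ((1 + X) ^ p - 1 - X ^ p : ℚ⟦X⟧) = (p.choose 5 : ℚ) := by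
    rw [hDc 5 (by norm_num)]; norm_num
  have hd6 : PowerSeries.coeff 6 ((1 + X) ^ p - 1 - X ^ p : ℚ⟦X⟧) = (p.choose 6 : ℚ) := by
    rw [hDc 6 (by norm_num)]; norm_num
  have E1 := congrArg (PowerSeries.coeff 1) hQ
  have E2 := congrArg (PowerSeries.coeff 2) hQ
  have E3 := congrArg (PowerSeries.coeff 3) hQ
  have E4 := congrArg (PowerSeries.coeff 4) hQ
  have E5 := congrArg (PowerSeries.coeff 5) hQ
  have E6 := congrArg (PowerSeries.coeff 6) hQ
  rw [PowerSeries.coeff_mul, Finset.Nat.sum_antidiagonal_eq_sum_range_succ_mk] at E1 E2 E3 E4 E5 E6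
  simp only [← map_natCast (C (R := ℚ)) p, neg_mul, map_neg, PowerSeries.coeff_C_mul,
    PowerSeries.coeff_X, Finset.sum_range_succ, Finset.sum_range_zero] at E1 E2 E3 E4 E5 E6
  norm_num [hd0, hd1, hd2, hd3, hd4, hd5, hd6] at E1 E2 E3 E4 E5 E6
  -- cast choose identities
  have key : ∀ k, ((p.descFactorial k : ℕ) : ℚ) = (k.factorial : ℚ) * (p.choose k : ℚ) := by
    intro k
    exact_mod_cast congrArg (Nat.cast : ℕ → ℚ) (Nat.descFactorial_eq_factorial_mul_choose p k)
  have s1 : ((p - 1 : ℕ) : ℚ) = (p : ℚ) - 1 := by rw [Nat.cast_sub (by omega)]; norm_num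
  have s2 : ((p - 2 : ℕ) : ℚ) = (p : ℚ) - 2 := by rw [Nat.cast_sub (by omega)]; norm_num
  have s3 : ((p - 3 : ℕ) : ℚ) = (p : ℚ) - 3 := by rw [Nat.cast_sub (by omega)]; norm_num
  have s4 : ((p - 4 : ℕ) : ℚ) = (p : ℚ) - 4 := by rw [Nat.cast_sub (by omega)]; norm_num
  have s5 : ((p - 5 : ℕ) : ℚ) = (p : ℚ) - 5 := by rw [Nat.cast_sub (by omega)]; norm_num
  have k2 := key 2
  have k3 := key 3
  have k4 := key 4
  have k5 := key 5
  have k6 := key 6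
  simp only [Nat.descFactorial_succ, Nat.descFactorial_zero, Nat.cast_mul, Nat.cast_one,
    Nat.sub_zero, s1, s2, s3, s4, s5, Nat.factorial] at k2 k3 k4 k5 k6
  norm_num at k2 k3 k4 k5 k6
  have hc2 : (p.choose 2 : ℚ) = (p : ℚ) * ((p : ℚ) - 1) / 2 := by
    field_simp; linear_combination -k2
  have hc3 : (p.choose 3 : ℚ) = (p : ℚ) * ((p : ℚ) - 1) * ((p : ℚ) - 2) / 6 := by
    field_simp; linear_combination -k3
  have hc4 : (p.choose 4 : ℚ) = (p : ℚ) * ((p : ℚ) - 1) * ((p : ℚ) - 2) * ((p : ℚ) - 3) / 24 := by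
    field_simp; linear_combination -k4
  have hc5 : (p.choose 5 : ℚ)
      = (p : ℚ) * ((p : ℚ) - 1) * ((p : ℚ) - 2) * ((p : ℚ) - 3) * ((p : ℚ) - 4) / 120 := by
    field_simp; linear_combination -k5
  have hc6 : (p.choose 6 : ℚ)
      = (p : ℚ) * ((p : ℚ) - 1) * ((p : ℚ) - 2) * ((p : ℚ) - 3) * ((p : ℚ) - 4) * ((p : ℚ) - 5) / 720 := by
    field_simp; linear_combination -k6
  rw [hc2] at E2 E3 E4 E5 E6
  rw [hc3] at E3 E4 E5 E6
  rw [hc4] at E4 E5 E6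
  rw [hc5] at E5 E6
  rw [hc6] at E6
  have hp0 : (p : ℚ) ≠ 0 := Nat.cast_ne_zero.mpr (by omega)
  have hq0 : PowerSeries.constantCoeff Q = -1 := by
    apply mul_right_cancel₀ hp0
    linear_combination E1
  have hq1 : PowerSeries.coeff 1 Q = ((p : ℚ) - 1) / 2 := by
    apply mul_right_cancel₀ hp0
    linear_combination E2 - ((p : ℚ) * ((p : ℚ) - 1) / 2) * hq0
  have hq2 : PowerSeries.coeff 2 Q = (1 - (p : ℚ) ^ 2) / 12 := by
    apply mul_right_cancel₀ hp0
    linear_combination E3 - ((p : ℚ) * ((p : ℚ) - 1) * ((p : ℚ) - 2) / 6) * hq0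
      - ((p : ℚ) * ((p : ℚ) - 1) / 2) * hq1
  have hq3 : PowerSeries.coeff 3 Q = ((p : ℚ) ^ 2 - 1) / 24 := by
    apply mul_right_cancel₀ hp0
    linear_combination E4 - ((p : ℚ) * ((p : ℚ) - 1) * ((p : ℚ) - 2) * ((p : ℚ) - 3) / 24) * hq0
      - ((p : ℚ) * ((p : ℚ) - 1) * ((p : ℚ) - 2) / 6) * hq1
      - ((p : ℚ) * ((p : ℚ) - 1) / 2) * hq2
  have hq4 : PowerSeries.coeff 4 Q = ((p : ℚ) ^ 4 - 20 * (p : ℚ) ^ 2 + 19) / 720 := by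
    apply mul_right_cancel₀ hp0
    linear_combination E5
      - ((p : ℚ) * ((p : ℚ) - 1) * ((p : ℚ) - 2) * ((p : ℚ) - 3) * ((p : ℚ) - 4) / 120) * hq0
      - ((p : ℚ) * ((p : ℚ) - 1) * ((p : ℚ) - 2) * ((p : ℚ) - 3) / 24) * hq1
      - ((p : ℚ) * ((p : ℚ) - 1) * ((p : ℚ) - 2) / 6) * hq2
      - ((p : ℚ) * ((p : ℚ) - 1) / 2) * hq3
  apply mul_right_cancel₀ hp0
  linear_combination E6
    - ((p : ℚ) * ((p : ℚ) - 1) * ((p : ℚ) - 2) * ((p : ℚ) - 3) * ((p : ℚ) - 4) * ((p : ℚ) - 5) / 720) * hq0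
    - ((p : ℚ) * ((p : ℚ) - 1) * ((p : ℚ) - 2) * ((p : ℚ) - 3) * ((p : ℚ) - 4) / 120) * hq1
    - ((p : ℚ) * ((p : ℚ) - 1) * ((p : ℚ) - 2) * ((p : ℚ) - 3) / 24) * hq2
    - ((p : ℚ) * ((p : ℚ) - 1) * ((p : ℚ) - 2) / 6) * hq3
    - ((p : ℚ) * ((p : ℚ) - 1) / 2) * hq4
end

section
/- For p = 5, the sequence K_{5,n} is periodic with period 6, with K_{5,0},...,K_{5,5} equal to -1, 2, -2, 1, 0, 0 respectively, and K_{5,n+6} = K_{5,n} for all n. -/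
open PowerSeries


/-- For `p = 5`, the sequence `K_{5,n}` is periodic with period 6, with
`K_{5,0},...,K_{5,5}` equal to `-1, 2, -2, 1, 0, 0` respectively. -/
theorem stmt_8
    (Q : PowerSeries ℚ)
    (hQ : Q * ((1 + PowerSeries.X) ^ 5 - 1 - PowerSeries.X ^ 5)
        = -(5 : PowerSeries ℚ) * PowerSeries.X) :
    PowerSeries.coeff 0 Q = -1 ∧
    PowerSeries.coeff 1 Q = 2 ∧
    PowerSeries.coeff 2 Q = -2 ∧
    PowerSeries.coeff 3 Q = 1 ∧
    PowerSeries.coeff 4 Q = 0 ∧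
    PowerSeries.coeff 5 Q = 0 ∧
    (∀ n : ℕ, PowerSeries.coeff (n + 6) Q = PowerSeries.coeff n Q) := by
  have h5X : (5 : PowerSeries ℚ) * X ≠ 0 := by
    intro h
    have := congrArg (coeff 1) h
    simp [coeff_X, map_ofNat] at this
  have hE : Q * (1 - X ^ 6) = -1 + 2 * X - 2 * X ^ 2 + X ^ 3 := by
    apply mul_right_cancel₀ h5X
    linear_combination (1 - 2 * X + 2 * X ^ 2 - X ^ 3) * hQ
  have hE' : Q = Q * X ^ 6 + (-1 + 2 * X - 2 * X ^ 2 + X ^ 3) := by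
    linear_combination hE
  have hc : ∀ n : ℕ, coeff n (-1 + 2 * X - 2 * X ^ 2 + X ^ 3 : PowerSeries ℚ) =
      if n = 0 then -1 else if n = 1 then 2 else if n = 2 then -2 else if n = 3 then 1 else 0 := by
    intro n
    have hr : (-1 + 2 * X - 2 * X ^ 2 + X ^ 3 : PowerSeries ℚ)
        = C (-1) + C 2 * X ^ 1 + C (-2) * X ^ 2 + C 1 * X ^ 3 := by
      simp only [map_neg, map_one, map_ofNat]
      ring
    rw [hr]
    simp only [map_add, coeff_C_mul_X_pow, coeff_C]
    rcases n with _ | _ | _ | _ | n <;> norm_num <;> split_ifs <;> first | omega | norm_num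
  have key : ∀ n : ℕ, coeff n Q =
      (if 6 ≤ n then coeff (n - 6) Q else 0) +
      (if n = 0 then -1 else if n = 1 then 2 else if n = 2 then -2 else if n = 3 then 1 else 0) := by
    intro n
    conv_lhs => rw [hE']
    rw [map_add, coeff_mul_X_pow', hc]
  refine ⟨?_, ?_, ?_, ?_, ?_, ?_, fun n => ?_⟩
  · rw [key 0]; norm_num
  · rw [key 1]; norm_num
  · rw [key 2]; norm_num
  · rw [key 3]; norm_num
  · rw [key 4]; norm_num
  · rw [key 5]; norm_num
  · rw [key (n + 6)]
    rw [if_pos (by omega : 6 ≤ n + 6)]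
    simp only [show n + 6 - 6 = n by omega]
    have : ¬(n + 6 = 0) := by omega
    rw [if_neg this, if_neg (by omega), if_neg (by omega), if_neg (by omega)]
    ring
end

section
/- For p = 7, the sequence K_{7,n} of coefficients of -7x/((1+x)⁷ - 1 - x⁷) is not periodic (in particular it is unbounded). -/
/-- For `p = 7`, the sequence `K_{7,n}` of coefficients of `-7x/((1+x)⁷ - 1 - x⁷)` is not
periodic; in particular it is unbounded. -/
theorem stmt_9
    (Q : PowerSeries ℚ)
    (hQ : Q * ((1 + PowerSeries.X) ^ 7 - 1 - PowerSeries.X ^ 7)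
        = -(7 : PowerSeries ℚ) * PowerSeries.X) :
    (¬ ∃ T : ℕ, 0 < T ∧ ∀ n : ℕ, PowerSeries.coeff (n + T) Q = PowerSeries.coeff n Q) ∧
    (∀ C : ℚ, ∃ n : ℕ, C < |PowerSeries.coeff n Q|) := by
  have hX7 : (7 : PowerSeries ℚ) * PowerSeries.X ≠ 0 := by
    intro h
    have h1 := congrArg (PowerSeries.coeff 1) h
    simp at h1
    rw [map_ofNat] at h1
    norm_num at h1
  have hKey : Q * ((1 - PowerSeries.X ^ 3) * (1 - PowerSeries.X ^ 6))
      = -((1 - PowerSeries.X) ^ 2 * (1 - PowerSeries.X + PowerSeries.X ^ 2)) := by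
    apply mul_left_cancel₀ hX7
    have h1 : (7 : PowerSeries ℚ) * PowerSeries.X
          * (Q * ((1 - PowerSeries.X ^ 3) * (1 - PowerSeries.X ^ 6)))
        = (Q * ((1 + PowerSeries.X) ^ 7 - 1 - PowerSeries.X ^ 7))
          * ((1 - PowerSeries.X) ^ 2 * (1 - PowerSeries.X + PowerSeries.X ^ 2)) := by
      ring
    rw [h1, hQ]
    ring
  have hC1 : (PowerSeries.C (-1)) = (-1 : PowerSeries ℚ) := by simp
  have hC3 : (PowerSeries.C 3) = (3 : PowerSeries ℚ) := by
    exact_mod_cast map_natCast (PowerSeries.C) 3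
  have hC4' : (PowerSeries.C 4) = (4 : PowerSeries ℚ) := by
    exact_mod_cast map_natCast (PowerSeries.C) 4
  have hC4 : (PowerSeries.C (-4)) = (-4 : PowerSeries ℚ) := by
    rw [show (-4 : ℚ) = -(4 : ℚ) from by norm_num, map_neg, hC4']
  have hKey3 : Q - Q * PowerSeries.X ^ 3 - Q * PowerSeries.X ^ 6 + Q * PowerSeries.X ^ 9
      = PowerSeries.C (-1) + PowerSeries.C 3 * PowerSeries.X ^ 1
        + PowerSeries.C (-4) * PowerSeries.X ^ 2 + PowerSeries.C 3 * PowerSeries.X ^ 3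
        + PowerSeries.C (-1) * PowerSeries.X ^ 4 := by
    rw [hC1, hC3, hC4]
    linear_combination hKey
  have hcoeff : ∀ m : ℕ,
      PowerSeries.coeff m Q - (if 3 ≤ m then PowerSeries.coeff (m - 3) Q else 0)
        - (if 6 ≤ m then PowerSeries.coeff (m - 6) Q else 0)
        + (if 9 ≤ m then PowerSeries.coeff (m - 9) Q else 0)
      = (if m = 0 then (-1 : ℚ) else 0)
        + (if 1 ≤ m then (if m - 1 = 0 then (3 : ℚ) else 0) else 0)
        + (if 2 ≤ m then (if m - 2 = 0 then (-4 : ℚ) else 0) else 0)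
        + (if 3 ≤ m then (if m - 3 = 0 then (3 : ℚ) else 0) else 0)
        + (if 4 ≤ m then (if m - 4 = 0 then (-1 : ℚ) else 0) else 0) := by
    intro m
    have h := congrArg (PowerSeries.coeff m) hKey3
    simpa only [map_add, map_sub, PowerSeries.coeff_mul_X_pow',
      PowerSeries.coeff_C_mul_X_pow, PowerSeries.coeff_C] using h
  have h0c : PowerSeries.constantCoeff Q = -1 := by
    have h := hcoeff 0
    norm_num at h
    linarith
  have h0 : PowerSeries.coeff 0 Q = -1 := by
    simpa using h0c
  have h3 : PowerSeries.coeff 3 Q = 2 := by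
    have h := hcoeff 3
    norm_num at h
    linarith
  have h6 : PowerSeries.coeff 6 Q = 1 := by
    have h := hcoeff 6
    norm_num at h
    linarith
  have hrec : ∀ n : ℕ, PowerSeries.coeff (n + 9) Q
      = PowerSeries.coeff (n + 6) Q + PowerSeries.coeff (n + 3) Q
        - PowerSeries.coeff n Q := by
    intro n
    have h := hcoeff (n + 9)
    have c1 : 3 ≤ n + 9 := by omega
    have c2 : 6 ≤ n + 9 := by omega
    have c3 : 9 ≤ n + 9 := by omega
    have e1 : 1 ≤ n + 9 := by omega
    have e2 : 2 ≤ n + 9 := by omega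
    have e4 : 4 ≤ n + 9 := by omega
    have d0 : ¬(n + 9 = 0) := by omega
    have f1 : ¬(n + 9 - 1 = 0) := by omega
    have f2 : ¬(n + 9 - 2 = 0) := by omega
    have f3 : ¬(n + 9 - 3 = 0) := by omega
    have f4 : ¬(n + 9 - 4 = 0) := by omega
    simp only [if_pos c1, if_pos c2, if_pos c3, if_pos e1, if_pos e2, if_pos e4,
      if_neg d0, if_neg f1, if_neg f2, if_neg f3, if_neg f4] at h
    rw [show n + 9 - 3 = n + 6 from by omega, show n + 9 - 6 = n + 3 from by omega,
      show n + 9 - 9 = n from by omega] at h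
    linarith
  have he3 : ∀ m : ℕ, PowerSeries.coeff (3 * m + 6) Q - PowerSeries.coeff (3 * m) Q
      = 2 := by
    intro m
    induction m with
    | zero => norm_num; linarith [h6, h0c]
    | succ m ih =>
      rw [show 3 * (m + 1) = 3 * m + 3 from by ring]
      rw [show 3 * m + 3 + 6 = 3 * m + 9 from by ring, hrec (3 * m)]
      linarith
  have hA : ∀ k : ℕ, PowerSeries.coeff (6 * k) Q = 2 * k - 1 := by
    intro k
    induction k with
    | zero => norm_num; linarith [h0c]
    | succ k ih =>
      have h := he3 (2 * k)
      rw [show 3 * (2 * k) = 6 * k from by ring] at h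
      rw [show 6 * (k + 1) = 6 * k + 6 from by ring]
      push_cast
      push_cast at ih
      linarith
  constructor
  · rintro ⟨T, hT, hper⟩
    have hper' : ∀ k : ℕ, PowerSeries.coeff (k * T) Q = PowerSeries.coeff 0 Q := by
      intro k
      induction k with
      | zero => norm_num
      | succ k ih =>
        rw [show (k + 1) * T = k * T + T from by ring, hper (k * T), ih]
    have hc := hper' 6
    rw [hA T, h0] at hc
    have hTpos : (0 : ℚ) < T := by exact_mod_cast hT
    linarith
  · intro C
    obtain ⟨k, hk⟩ := exists_nat_gt C
    refine ⟨6 * (k + 1), ?_⟩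
    rw [hA (k + 1)]
    have hk0 : (0 : ℚ) ≤ k := Nat.cast_nonneg k
    have hpos : (0 : ℚ) < 2 * ((k : ℚ) + 1) - 1 := by linarith
    rw [show ((k + 1 : ℕ) : ℚ) = (k : ℚ) + 1 from by push_cast; ring, abs_of_pos hpos]
    linarith
end

section
/- For each fixed n ≥ 1, the limit as the prime p tends to infinity of -n!·K_{p,n}/p^n equals the n-th Bernoulli number B_n. -/
/-- `Kser p = -p·X/((1+X)^p - 1 - X^p)`, written as `-1/g` where
`(1+X)^p - 1 - X^p = p·X·g(X)` with `g = Σ_j (C(p,j+1)/p)·X^j`. -/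
noncomputable def Kser (p : ℕ) : PowerSeries ℚ :=
  -(PowerSeries.mk fun j => (p.choose (j + 1) : ℚ) / p)⁻¹

section Aux

open PowerSeries Filter Finset

lemma castchoose (p j : ℕ) (hp : j + 1 ≤ p) :
    (p.choose (j+1) : ℚ) * (Nat.factorial (j+1)) = ∏ i ∈ range (j+1), ((p:ℚ) - i) := by
  have h := Nat.descFactorial_eq_factorial_mul_choose p (j+1)
  rw [Nat.descFactorial_eq_prod_range] at h
  have h2 : ((∏ i ∈ range (j+1), (p - i) : ℕ) : ℚ) = ((Nat.factorial (j+1) * p.choose (j+1) : ℕ) : ℚ) := by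
    exact_mod_cast congrArg (Nat.cast : ℕ → ℚ) h
  push_cast at h2
  rw [Finset.prod_congr rfl (fun i hi => Nat.cast_sub (by simp at hi; omega))] at h2
  linear_combination -h2

lemma tendA (j : ℕ) :
    Tendsto (fun p : ℕ => (p.choose (j+1) : ℚ) / (p:ℚ)^(j+1)) atTop
      (nhds (1 / (Nat.factorial (j+1) : ℚ))) := by
  have hinv : Tendsto (fun p : ℕ => ((p:ℚ))⁻¹) atTop (nhds 0) :=
    tendsto_inv_atTop_zero.comp tendsto_natCast_atTop_atTop
  have hev : ∀ᶠ p : ℕ in atTop,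
      (p.choose (j+1) : ℚ) / (p:ℚ)^(j+1)
        = (∏ i ∈ range (j+1), (1 - (i:ℚ) * ((p:ℚ))⁻¹)) / (Nat.factorial (j+1) : ℚ) := by
    filter_upwards [eventually_ge_atTop (j+1)] with p hp
    have hp0 : (p:ℚ) ≠ 0 := by
      have : 0 < p := by omega
      exact_mod_cast this.ne'
    have hc := castchoose p j hp
    have hfac : (Nat.factorial (j+1) : ℚ) ≠ 0 := by exact_mod_cast (Nat.factorial_pos _).ne'
    have hprod : ∏ i ∈ range (j+1), (1 - (i:ℚ) * ((p:ℚ))⁻¹)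
        = (∏ i ∈ range (j+1), ((p:ℚ) - i)) / (p:ℚ)^(j+1) := by
      rw [show ((p:ℚ))^(j+1) = ∏ _i ∈ range (j+1), (p:ℚ) by
            rw [Finset.prod_const, card_range], ← Finset.prod_div_distrib]
      exact Finset.prod_congr rfl fun i _ => by field_simp
    rw [hprod, ← hc]
    field_simp
  refine Tendsto.congr' (Filter.EventuallyEq.symm hev) ?_
  have : Tendsto (fun p : ℕ => (∏ i ∈ range (j+1), (1 - (i:ℚ) * ((p:ℚ))⁻¹))) atTop (nhds 1) := by
    have := tendsto_finset_prod (ι := ℕ) (α := ℕ) (M := ℚ)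
      (f := fun i (p:ℕ) => 1 - (i:ℚ) * ((p:ℚ))⁻¹) (a := fun _ => 1) (range (j+1)) (fun i _ => by
        simpa using (tendsto_const_nhds.sub (hinv.const_mul (i:ℚ))))
    simpa using this
  simpa using this.div_const _

lemma expsub : PowerSeries.exp ℚ - 1 = PowerSeries.X * (PowerSeries.mk fun j => 1/((Nat.factorial (j+1)) : ℚ)) := by
  ext n
  cases n with
  | zero => simp [PowerSeries.coeff_exp]
  | succ n =>
    rw [PowerSeries.coeff_succ_X_mul]
    simp [PowerSeries.coeff_exp, PowerSeries.coeff_one]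

lemma bmk : bernoulliPowerSeries ℚ * (PowerSeries.mk fun j => 1/((Nat.factorial (j+1)) : ℚ)) = 1 := by
  have h := bernoulliPowerSeries_mul_exp_sub_one ℚ
  rw [expsub] at h
  have h2 : PowerSeries.X * (bernoulliPowerSeries ℚ * (PowerSeries.mk fun j => 1/((Nat.factorial (j+1)) : ℚ))) = PowerSeries.X * 1 := by
    rw [mul_one, show PowerSeries.X * (bernoulliPowerSeries ℚ * (PowerSeries.mk fun j => 1/((Nat.factorial (j+1)) : ℚ))) = bernoulliPowerSeries ℚ * (PowerSeries.X * (PowerSeries.mk fun j => 1/((Nat.factorial (j+1)) : ℚ))) from by ring, h]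
  exact mul_left_cancel₀ PowerSeries.X_ne_zero h2

lemma bcoeff (n : ℕ) :
    ∑ k ∈ range (n+1), (bernoulli k / (Nat.factorial k : ℚ)) * (1/(Nat.factorial (n-k+1):ℚ))
      = if n = 0 then 1 else 0 := by
  have h := congrArg (PowerSeries.coeff n) bmk
  rw [PowerSeries.coeff_mul, Finset.Nat.sum_antidiagonal_eq_sum_range_succ_mk] at h
  simpa [bernoulliPowerSeries, PowerSeries.coeff_one] using h

lemma cident (n : ℕ) :
    bernoulli n / (Nat.factorial n : ℚ)
      = (if n = 0 then 1 else 0) - ∑ k ∈ range n,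
          (1/((Nat.factorial (k+2)):ℚ)) * (bernoulli (n-(k+1)) / ((Nat.factorial (n-(k+1))):ℚ)) := by
  have h := bcoeff n
  rw [Finset.sum_range_succ] at h
  have hr : ∑ k ∈ range n, (1/((Nat.factorial (k+2)):ℚ)) * (bernoulli (n-(k+1)) / ((Nat.factorial (n-(k+1))):ℚ))
      = ∑ k ∈ range n, (bernoulli k / (Nat.factorial k : ℚ)) * (1/(Nat.factorial (n-k+1):ℚ)) := by
    rw [← Finset.sum_range_reflect]
    refine Finset.sum_congr rfl fun j hj => ?_
    simp only [mem_range] at hj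
    have e1 : n - 1 - j + 2 = n - j + 1 := by omega
    have e2 : n - (n - 1 - j + 1) = j := by omega
    rw [e1, e2, mul_comm]
  rw [hr]
  have : (bernoulli n / (Nat.factorial n : ℚ)) * (1/(Nat.factorial (n-n+1):ℚ)) = bernoulli n / (Nat.factorial n : ℚ) := by
    simp [Nat.sub_self, Nat.factorial]
  rw [this] at h
  linarith [h]


lemma recur (n p : ℕ) (hp : p.Prime) :
    PowerSeries.coeff n (PowerSeries.mk fun j => (p.choose (j + 1) : ℚ) / p)⁻¹ / (p:ℚ)^n
      = (if n = 0 then 1 else 0) - ∑ k ∈ range n,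
          ((p.choose (k+2):ℚ)/(p:ℚ)^(k+2)) *
            (PowerSeries.coeff (n-(k+1)) (PowerSeries.mk fun j => (p.choose (j + 1) : ℚ) / p)⁻¹ / (p:ℚ)^(n-(k+1))) := by
  have hp0 : (p:ℚ) ≠ 0 := by exact_mod_cast hp.pos.ne'
  set g : PowerSeries ℚ := PowerSeries.mk fun j => (p.choose (j + 1) : ℚ) / p with hg
  have hcoe : ∀ j, PowerSeries.coeff j g = (p.choose (j + 1) : ℚ) / p := fun j => by
    rw [hg, PowerSeries.coeff_mk]
  have hc0 : PowerSeries.constantCoeff g = 1 := by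
    rw [← PowerSeries.coeff_zero_eq_constantCoeff, hcoe]
    simp [Nat.choose_one_right, div_self hp0]
  have h1 : g * g⁻¹ = 1 := PowerSeries.mul_inv_cancel _ (by rw [hc0]; exact one_ne_zero)
  have h := congrArg (PowerSeries.coeff n) h1
  rw [PowerSeries.coeff_mul, Finset.Nat.sum_antidiagonal_eq_sum_range_succ_mk,
    Finset.sum_range_succ', PowerSeries.coeff_one] at h
  rw [hcoe 0] at h
  have hc1 : (p.choose (0 + 1) : ℚ) / p = 1 := by
    simp [Nat.choose_one_right, div_self hp0]
  rw [hc1, Nat.sub_zero, one_mul] at h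
  have hrec : PowerSeries.coeff n g⁻¹
      = (if n = 0 then 1 else 0)
        - ∑ k ∈ range n, ((p.choose (k+2):ℚ)/p) * PowerSeries.coeff (n-(k+1)) g⁻¹ := by
    rw [eq_sub_iff_add_eq, add_comm, ← h]
    congr 1
    exact Finset.sum_congr rfl fun k _ => by rw [hcoe (k+1)]
  rw [hrec, sub_div, Finset.sum_div]
  congr 1
  · by_cases h0 : n = 0 <;> simp [h0]
  · refine Finset.sum_congr rfl fun k hk => ?_
    simp only [mem_range] at hk
    have hpow : (p:ℚ)^n = (p:ℚ)^(k+1) * (p:ℚ)^(n-(k+1)) := by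
      rw [← pow_add]; congr 1; omega
    have h2 : (p:ℚ)^(k+2) = (p:ℚ) * (p:ℚ)^(k+1) := by ring
    generalize PowerSeries.coeff (n-(k+1)) g⁻¹ = c
    rw [hpow, h2]
    rw [div_mul_eq_mul_div, div_div, div_mul_div_comm, mul_assoc]

lemma keyB (n : ℕ) :
    Tendsto (fun p : ℕ =>
        PowerSeries.coeff n (PowerSeries.mk fun j => (p.choose (j + 1) : ℚ) / p)⁻¹ / (p:ℚ)^n)
      (atTop ⊓ Filter.principal {p : ℕ | p.Prime})
      (nhds (bernoulli n / (Nat.factorial n : ℚ))) := by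
  induction n using Nat.strong_induction_on with
  | _ n ih =>
  have hev : ∀ᶠ p : ℕ in (atTop ⊓ Filter.principal {p : ℕ | p.Prime}),
      PowerSeries.coeff n (PowerSeries.mk fun j => (p.choose (j + 1) : ℚ) / p)⁻¹ / (p:ℚ)^n
        = (if n = 0 then 1 else 0) - ∑ k ∈ range n,
            ((p.choose (k+2):ℚ)/(p:ℚ)^(k+2)) *
              (PowerSeries.coeff (n-(k+1)) (PowerSeries.mk fun j => (p.choose (j + 1) : ℚ) / p)⁻¹ / (p:ℚ)^(n-(k+1))) := by
    rw [eventually_inf_principal]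
    exact Filter.Eventually.of_forall fun p hp => recur n p hp
  refine Tendsto.congr' (Filter.EventuallyEq.symm hev) ?_
  have hlim : Tendsto (fun p : ℕ =>
      (if n = 0 then (1:ℚ) else 0) - ∑ k ∈ range n,
        ((p.choose (k+2):ℚ)/(p:ℚ)^(k+2)) *
          (PowerSeries.coeff (n-(k+1)) (PowerSeries.mk fun j => (p.choose (j + 1) : ℚ) / p)⁻¹ / (p:ℚ)^(n-(k+1))))
      (atTop ⊓ Filter.principal {p : ℕ | p.Prime})
      (nhds ((if n = 0 then (1:ℚ) else 0) - ∑ k ∈ range n,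
        (1/((Nat.factorial (k+2)):ℚ)) * (bernoulli (n-(k+1)) / ((Nat.factorial (n-(k+1))):ℚ)))) := by
    refine Tendsto.sub tendsto_const_nhds (tendsto_finset_sum _ fun k hk => ?_)
    simp only [mem_range] at hk
    exact Tendsto.mul ((tendA (k+1)).mono_left inf_le_left) (ih _ (by omega))
  rw [← cident n] at hlim
  exact hlim

/-- For each fixed `n ≥ 1`, the limit as the prime `p` tends to infinity of
`-n!·K_{p,n}/p^n` equals the `n`-th Bernoulli number `B_n`. -/
theorem stmt_10 (n : ℕ) (hn : 1 ≤ n) :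
    Filter.Tendsto
      (fun p : ℕ =>
        -(Nat.factorial n : ℚ) * PowerSeries.coeff n (Kser p) / (p : ℚ) ^ n)
      (Filter.atTop ⊓ Filter.principal {p : ℕ | p.Prime})
      (nhds (bernoulli n)) := by
  have h := (keyB n).const_mul ((Nat.factorial n : ℚ))
  have he : (Nat.factorial n : ℚ) * (bernoulli n / (Nat.factorial n : ℚ)) = bernoulli n := by
    have : (Nat.factorial n : ℚ) ≠ 0 := by exact_mod_cast (Nat.factorial_pos n).ne'
    field_simp
  rw [he] at h
  refine h.congr fun p => ?_
  simp only [Kser, map_neg]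
  ring

end Aux
end

section
/- For an odd prime p, in the ring ℤ[μ]/((1+μ)^p - 1), one has p·μ = Σ_{n=0}^{N} K_{p,n}·μ^{p+n} for every N with p+N ≥ the nilpotency degree; more precisely, p·μ - Σ_{n=0}^{N} K_{p,n}·μ^{p+n} lies in the ideal generated by μ^{p+N+1} together with ((1+μ)^p - 1), for all N ≥ 0. -/
open Polynomial PowerSeries

lemma sub_trunc_dvd (Q : PowerSeries ℤ) (m : ℕ) :
    (PowerSeries.X : PowerSeries ℤ) ^ m ∣ (Q - (PowerSeries.trunc m Q : Polynomial ℤ)) := by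
  rw [PowerSeries.X_pow_dvd_iff]
  intro k hk
  simp [Polynomial.coeff_coe, PowerSeries.coeff_trunc, hk]

/-- For an odd prime `p`, in the ring `ℤ[μ]/((1+μ)^p - 1)`, the element
`p·μ - Σ_{n=0}^{N} K_{p,n}·μ^{p+n}` lies in the ideal generated by `μ^{p+N+1}`, for all `N ≥ 0`.
Here `K_{p,n}` is the `n`-th coefficient of the integral power series `Q` with
`p·X + Q·((1+X)^p - 1 - X^p) = 0`, i.e. `Q = -p·X/((1+X)^p - 1 - X^p)`. -/
theorem stmt_11 (p : ℕ) (hp : p.Prime) (hodd : Odd p)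
    (Q : PowerSeries ℤ)
    (hQ : (p : PowerSeries ℤ) * PowerSeries.X
        + Q * ((1 + PowerSeries.X) ^ p - 1 - PowerSeries.X ^ p) = 0) :
    ∀ N : ℕ,
      (p : Polynomial ℤ ⧸ Ideal.span {((1 + Polynomial.X) ^ p - 1 : Polynomial ℤ)}) *
          Ideal.Quotient.mk (Ideal.span {((1 + Polynomial.X) ^ p - 1 : Polynomial ℤ)})
            Polynomial.X
        - ∑ n ∈ Finset.range (N + 1),
            (PowerSeries.coeff (R := ℤ) n Q :
                Polynomial ℤ ⧸ Ideal.span {((1 + Polynomial.X) ^ p - 1 : Polynomial ℤ)}) *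
              (Ideal.Quotient.mk (Ideal.span {((1 + Polynomial.X) ^ p - 1 : Polynomial ℤ)})
                  Polynomial.X) ^ (p + n)
      ∈ Ideal.span
          {(Ideal.Quotient.mk (Ideal.span {((1 + Polynomial.X) ^ p - 1 : Polynomial ℤ)})
              Polynomial.X) ^ (p + N + 1)} := by
  intro N
  set I : Ideal (Polynomial ℤ) :=
    Ideal.span {((1 + Polynomial.X) ^ p - 1 : Polynomial ℤ)} with hI
  set mk := Ideal.Quotient.mk I with hmk
  set T : Polynomial ℤ := PowerSeries.trunc (N + 1) Q with hT
  set T' : Polynomial ℤ := PowerSeries.trunc (p + N + 1) Q with hT'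
  set G : Polynomial ℤ :=
    (p : Polynomial ℤ) * Polynomial.X - T * Polynomial.X ^ p
      + T' * ((1 + Polynomial.X) ^ p - 1) with hG
  -- Key power series identity
  have hQrel : Q * ((1 + PowerSeries.X) ^ p - 1)
      = Q * PowerSeries.X ^ p - (p : PowerSeries ℤ) * PowerSeries.X := by
    linear_combination hQ
  have hGcoe : (G : PowerSeries ℤ)
      = (Q - (T : PowerSeries ℤ)) * PowerSeries.X ^ p
        - (Q - (T' : PowerSeries ℤ)) * ((1 + PowerSeries.X) ^ p - 1) := by
    have hc : ((↑p : Polynomial ℤ) : PowerSeries ℤ) = (((p : ℤ)) : PowerSeries ℤ) := by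
      rw [← Polynomial.coeToPowerSeries.ringHom_apply, map_natCast]
      norm_cast
    have hQrel' : Q * ((1 + PowerSeries.X) ^ p - 1)
        = Q * PowerSeries.X ^ p - (((p : ℤ) : PowerSeries ℤ)) * PowerSeries.X := by
      push_cast
      linear_combination hQ
    push_cast [hG]
    rw [hc]
    linear_combination hQrel'
  have hdvd : (PowerSeries.X : PowerSeries ℤ) ^ (p + N + 1) ∣ (G : PowerSeries ℤ) := by
    rw [hGcoe]
    apply dvd_sub
    · have h1 := sub_trunc_dvd Q (N + 1)
      have : (PowerSeries.X : PowerSeries ℤ) ^ (p + N + 1)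
          = PowerSeries.X ^ (N + 1) * PowerSeries.X ^ p := by ring
      rw [this]
      exact mul_dvd_mul h1 dvd_rfl
    · exact (sub_trunc_dvd Q (p + N + 1)).mul_right _
  -- transfer to polynomial divisibility
  have hdvdG : (Polynomial.X : Polynomial ℤ) ^ (p + N + 1) ∣ G := by
    rw [Polynomial.X_pow_dvd_iff]
    intro d hd
    rw [← Polynomial.coeff_coe]
    rw [PowerSeries.X_pow_dvd_iff] at hdvd
    exact hdvd d hd
  obtain ⟨h, hh⟩ := hdvdG
  -- compute the target element as mk G
  have hmem : (((1 + Polynomial.X) ^ p - 1 : Polynomial ℤ)) ∈ I :=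
    Ideal.subset_span rfl
  have hmkzero : mk (T' * ((1 + Polynomial.X) ^ p - 1)) = 0 := by
    rw [Ideal.Quotient.eq_zero_iff_mem]
    exact I.mul_mem_left _ hmem
  have hsum : mk (T * Polynomial.X ^ p)
      = ∑ n ∈ Finset.range (N + 1),
          (PowerSeries.coeff (R := ℤ) n Q : Polynomial ℤ ⧸ I) * (mk Polynomial.X) ^ (p + n) := by
    rw [hT, PowerSeries.trunc_apply, ← Finset.range_eq_Ico, Finset.sum_mul, map_sum]
    refine Finset.sum_congr rfl fun n _ => ?_
    rw [← Polynomial.C_mul_X_pow_eq_monomial]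
    have : (Polynomial.C ((PowerSeries.coeff (R := ℤ) n) Q) : Polynomial ℤ)
        = ((PowerSeries.coeff (R := ℤ) n Q : ℤ) : Polynomial ℤ) := by
      simp [Polynomial.C_eq_intCast]
    rw [this]
    simp [map_mul, map_pow, pow_add]
    ring
  have hmain : (p : Polynomial ℤ ⧸ I) * mk Polynomial.X
      - ∑ n ∈ Finset.range (N + 1),
          (PowerSeries.coeff (R := ℤ) n Q : Polynomial ℤ ⧸ I) * (mk Polynomial.X) ^ (p + n)
      = mk G := by
    rw [hG, map_add, map_sub, hmkzero, add_zero, hsum, map_mul, map_natCast]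
  rw [hmain, hh, map_mul, map_pow]
  exact Ideal.mem_span_singleton.mpr ⟨mk h, rfl⟩
end

section
/- For a prime p ≥ 7, M_{p,2} = -(p²-1)(7p²+17)/5760. -/
/-- The relation polynomial for `KO(BZ_p)`:
`f_p(x) = p + Σ_{j=1}^{(p-3)/2} [p·(p²-1²)(p²-3²)···(p²-(2j-1)²)/(2^{2j}·(2j+1)!)]·x^j + x^{(p-1)/2}`,
viewed as a power series over `ℚ`. -/
noncomputable def fser (p : ℕ) : PowerSeries ℚ :=
  PowerSeries.mk fun j =>
    if j = 0 then (p : ℚ)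
    else if j = (p - 1) / 2 then 1
    else if j ≤ (p - 3) / 2 then
      ((p : ℚ) * ∏ i ∈ Finset.range j, ((p : ℚ) ^ 2 - (2 * (i : ℚ) + 1) ^ 2)) /
        (2 ^ (2 * j) * Nat.factorial (2 * j + 1))
    else 0

/-- For a prime `p ≥ 7`, `M_{p,2} = -(p²-1)(7p²+17)/5760`. -/
theorem stmt_16 (p : ℕ) (hp : p.Prime) (hp7 : 7 ≤ p)
    (Q : PowerSeries ℚ)
    (hQ : Q * (PowerSeries.X * fser p - PowerSeries.X ^ ((p + 1) / 2))
        = -(p : PowerSeries ℚ) * PowerSeries.X) :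
    PowerSeries.coeff 2 Q =
      -(((p : ℚ) ^ 2 - 1) * (7 * (p : ℚ) ^ 2 + 17) / 5760) := by
  have hpQ : (p : ℚ) ≠ 0 := by
    exact_mod_cast hp.ne_zero
  have hk : 4 ≤ (p + 1) / 2 := by omega
  -- coefficients of fser
  have hf0 : PowerSeries.coeff 0 (fser p) = p := by simp [fser]
  have hf1 : PowerSeries.coeff 1 (fser p) = (p : ℚ) * ((p : ℚ) ^ 2 - 1) / 24 := by
    have h1 : (1 : ℕ) ≠ (p - 1) / 2 := by omega
    have h2 : (1 : ℕ) ≤ (p - 3) / 2 := by omega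
    simp [fser, h1, h2, Finset.prod_range_succ, Nat.factorial]
    ring
  have hf2 : PowerSeries.coeff 2 (fser p) =
      (p : ℚ) * (((p : ℚ) ^ 2 - 1) * ((p : ℚ) ^ 2 - 9)) / 1920 := by
    have h1 : (2 : ℕ) ≠ (p - 1) / 2 := by omega
    have h2 : (2 : ℕ) ≤ (p - 3) / 2 := by omega
    simp [fser, h1, h2, Finset.prod_range_succ, Nat.factorial]
    norm_num
  -- rewrite hQ
  have key : ∀ n : ℕ, n ≤ 2 →
      PowerSeries.coeff n (Q * fser p) = if n = 0 then -(p : ℚ) else 0 := by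
    intro n hn
    have h := congrArg (PowerSeries.coeff (n + 1)) hQ
    rw [mul_sub] at h
    have hX : Q * (PowerSeries.X * fser p) = Q * fser p * PowerSeries.X := by ring
    rw [hX, map_sub, PowerSeries.coeff_succ_mul_X,
      PowerSeries.coeff_mul_X_pow'] at h
    rw [if_neg (by omega), sub_zero, neg_mul, map_neg,
      PowerSeries.coeff_succ_mul_X] at h
    have hc : PowerSeries.coeff n ((p : PowerSeries ℚ)) = if n = 0 then (p : ℚ) else 0 := by
      rw [← map_natCast (PowerSeries.C (R := ℚ)) p, PowerSeries.coeff_C]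
    rw [hc] at h
    rw [h]
    split <;> simp
  have hf0' : PowerSeries.constantCoeff (fser p) = p := by simpa using hf0
  have h0 := key 0 (by norm_num)
  have h1 := key 1 (by norm_num)
  have h2 := key 2 (by norm_num)
  rw [PowerSeries.coeff_mul, Finset.Nat.sum_antidiagonal_eq_sum_range_succ_mk] at h1 h2
  simp [Finset.sum_range_succ] at h0 h1 h2
  rw [hf0', hf1] at h1
  rw [hf0', hf1, hf2] at h2
  have hq0 : (PowerSeries.constantCoeff) Q = -1 := by
    rw [hf0'] at h0
    exact mul_right_cancel₀ hpQ (by linear_combination h0)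
  rw [hq0] at h1 h2
  have hq1 : PowerSeries.coeff 1 Q = ((p : ℚ) ^ 2 - 1) / 24 :=
    mul_right_cancel₀ hpQ (by linear_combination h1)
  rw [hq1] at h2
  exact mul_right_cancel₀ hpQ (by linear_combination h2)
end

section
/- For an odd prime p, all coefficients of the polynomial f_p(x) = p + Σ_{j=1}^{(p-3)/2} [p·(p²-1²)(p²-3²)···(p²-(2j-1)²)/(2^{2j}·(2j+1)!)]·x^j + x^{(p-1)/2} are integers; i.e., 2^{2j}·(2j+1)! divides p·(p²-1²)(p²-3²)···(p²-(2j-1)²) for 1 ≤ j ≤ (p-3)/2. -/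
lemma aux_prod_fact (m : ℕ) : ∀ j : ℕ, j ≤ m →
    (∏ i ∈ Finset.range j, (m - i) * (m + i + 1)) * Nat.factorial (m - j)
      = Nat.factorial (m + j) := by
  intro j
  induction j with
  | zero => simp
  | succ j ih =>
    intro hj
    have hj' : j ≤ m := by omega
    have h1 : m - j = (m - (j + 1)) + 1 := by omega
    rw [Finset.prod_range_succ]
    have := ih hj'
    rw [h1, Nat.factorial_succ] at this
    have h2 : m + (j + 1) = (m + j) + 1 := by omega
    rw [h2, Nat.factorial_succ, ← this]
    have h3 : m - (j + 1) + 1 = m - j := by omega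
    ring_nf
    rw [show m - j = m - (1 + j) + 1 by omega]
    ring

lemma aux_dvd (m j : ℕ) (h : j + 1 ≤ m) :
    Nat.factorial (2 * j + 1) ∣
      (2 * m + 1) * ∏ i ∈ Finset.range j, (m - i) * (m + i + 1) := by
  set c := Nat.choose (m + j + 1) (2 * j + 1) + Nat.choose (m + j) (2 * j + 1) with hc
  refine ⟨c, ?_⟩
  have key : (2 * m + 1) * Nat.factorial (m + j)
      = Nat.factorial (2 * j + 1) * c * Nat.factorial (m - j) := by
    have e1 : Nat.choose (m + j + 1) (2 * j + 1) * Nat.factorial (2 * j + 1) *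
        Nat.factorial (m - j) = Nat.factorial (m + j + 1) := by
      have := Nat.choose_mul_factorial_mul_factorial
        (show 2 * j + 1 ≤ m + j + 1 by omega)
      have h4 : m + j + 1 - (2 * j + 1) = m - j := by omega
      rwa [h4] at this
    have e2 : Nat.choose (m + j) (2 * j + 1) * Nat.factorial (2 * j + 1) *
        Nat.factorial (m - j - 1) = Nat.factorial (m + j) := by
      have := Nat.choose_mul_factorial_mul_factorial
        (show 2 * j + 1 ≤ m + j by omega)
      have h4 : m + j - (2 * j + 1) = m - j - 1 := by omega
      rwa [h4] at this
    have h5 : Nat.factorial (m - j) = (m - j) * Nat.factorial (m - j - 1) := by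
      have h6 : m - j = (m - j - 1) + 1 := by omega
      nth_rewrite 1 [h6]
      rw [Nat.factorial_succ, ← h6]
    calc (2 * m + 1) * Nat.factorial (m + j)
        = (m + j + 1) * Nat.factorial (m + j) + (m - j) * Nat.factorial (m + j) := by
          have : 2 * m + 1 = (m + j + 1) + (m - j) := by omega
          rw [this, Nat.add_mul]
      _ = Nat.factorial (m + j + 1) + (m - j) * Nat.factorial (m + j) := by
          rw [Nat.factorial_succ]
      _ = Nat.choose (m + j + 1) (2 * j + 1) * Nat.factorial (2 * j + 1) *
            Nat.factorial (m - j) + (m - j) *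
            (Nat.choose (m + j) (2 * j + 1) * Nat.factorial (2 * j + 1) *
            Nat.factorial (m - j - 1)) := by rw [e1, e2]
      _ = Nat.factorial (2 * j + 1) * c * Nat.factorial (m - j) := by
          rw [hc, h5]; ring
  have hprod := aux_prod_fact m j (by omega)
  have hne : Nat.factorial (m - j) ≠ 0 := Nat.factorial_ne_zero _
  have : (2 * m + 1) * (∏ i ∈ Finset.range j, (m - i) * (m + i + 1)) *
      Nat.factorial (m - j) = Nat.factorial (2 * j + 1) * c * Nat.factorial (m - j) := by
    rw [Nat.mul_assoc, hprod, key]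
  exact Nat.eq_of_mul_eq_mul_right (Nat.pos_of_ne_zero hne) this

/-- For an odd prime `p`, all coefficients of the polynomial `f_p` are integers; i.e.,
`2^{2j}·(2j+1)!` divides `p·(p²-1²)(p²-3²)···(p²-(2j-1)²)` for `1 ≤ j ≤ (p-3)/2`. -/
theorem stmt_19 (p : ℕ) (hp : p.Prime) (hodd : Odd p) :
    ∀ j : ℕ, 1 ≤ j → j ≤ (p - 3) / 2 →
      ((2 : ℤ) ^ (2 * j) * (Nat.factorial (2 * j + 1) : ℤ)) ∣
        ((p : ℤ) * ∏ i ∈ Finset.range j, ((p : ℤ) ^ 2 - (2 * (i : ℤ) + 1) ^ 2)) := by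
  intro j hj1 hj2
  obtain ⟨m, hm⟩ := hodd
  have hjm : j + 1 ≤ m := by omega
  have hcast : ((∏ i ∈ Finset.range j, (m - i) * (m + i + 1) : ℕ) : ℤ)
      = ∏ i ∈ Finset.range j, ((m : ℤ) - i) * ((m : ℤ) + i + 1) := by
    push_cast
    apply Finset.prod_congr rfl
    intro i hi
    have him : i ≤ m := by have := Finset.mem_range.mp hi; omega
    rw [Nat.cast_sub him]
  have hprod : (∏ i ∈ Finset.range j, ((p : ℤ) ^ 2 - (2 * (i : ℤ) + 1) ^ 2))
      = (4 : ℤ) ^ j * ∏ i ∈ Finset.range j, ((m : ℤ) - i) * ((m : ℤ) + i + 1) := by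
    rw [show (4 : ℤ) ^ j = ∏ _i ∈ Finset.range j, (4 : ℤ) by simp,
      ← Finset.prod_mul_distrib]
    apply Finset.prod_congr rfl
    intro i hi
    rw [hm]; push_cast; ring
  obtain ⟨c, hcc⟩ := aux_dvd m j hjm
  have hz : ((2 * m + 1 : ℕ) : ℤ) * ((∏ i ∈ Finset.range j, (m - i) * (m + i + 1) : ℕ) : ℤ)
      = (Nat.factorial (2 * j + 1) : ℤ) * c := by exact_mod_cast hcc
  rw [hcast] at hz
  push_cast at hz
  refine ⟨(c : ℤ), ?_⟩
  have hp' : (p : ℤ) = 2 * (m : ℤ) + 1 := by rw [hm]; push_cast; ring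
  rw [hprod, hp']
  have h4 : (4 : ℤ) ^ j = 2 ^ (2 * j) := by
    rw [show (4 : ℤ) = 2 ^ 2 by norm_num, ← pow_mul]
  calc (2 * (m : ℤ) + 1) * ((4 : ℤ) ^ j * ∏ i ∈ Finset.range j, ((m : ℤ) - i) * ((m : ℤ) + i + 1))
      = (4 : ℤ) ^ j * ((2 * (m : ℤ) + 1) * ∏ i ∈ Finset.range j, ((m : ℤ) - i) * ((m : ℤ) + i + 1)) := by
        ring
    _ = (4 : ℤ) ^ j * ((Nat.factorial (2 * j + 1) : ℤ) * c) := by rw [hz]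
    _ = 2 ^ (2 * j) * (Nat.factorial (2 * j + 1) : ℤ) * c := by rw [h4]; ring
end
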